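/- There exist constants c₁, c₂ with 0 < c₁ ≤ c₂ such that c₁ ≤ |(σ(S) − σ(T))/(S − T)| ≤ c₂ for all S, T on the unit circle Γ with S ≠ T. -/

import Mathlib

open Complex Metric Set MeasureTheory Filter Topology

/-- A conformal mapping of the open unit disk onto a bounded simply connected domain `Dz ⊂ ℂ`,
extending to a homeomorphism of the closed disk onto the closure of `Dz`, with a nonvanishing
continuous contour derivative `σ'` on the unit circle `Γ`. -/
structure ConformalMap where
  /-- the conformal mapping -/
  σ : ℂ → ℂ
  /-- its contour derivative on the unit circle -/
  σ' : ℂ → ℂ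
  /-- the image domain -/
  Dz : Set ℂ
  isOpen_Dz : IsOpen Dz
  bounded_Dz : Bornology.IsBounded Dz
  holo : DifferentiableOn ℂ σ (ball 0 1)
  injOn : InjOn σ (closedBall 0 1)
  contOn : ContinuousOn σ (closedBall 0 1)
  image_ball : σ '' ball 0 1 = Dz
  image_closedBall : σ '' closedBall 0 1 = closure Dz
  cont_deriv : ContinuousOn σ' (sphere 0 1)
  deriv_ne_zero : ∀ T ∈ sphere (0 : ℂ) 1, σ' T ≠ 0
  hasDeriv : ∀ θ : ℝ, HasDerivAt (fun t : ℝ => σ (Complex.exp (Complex.I * t)))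
    (Complex.I * Complex.exp (Complex.I * θ) * σ' (Complex.exp (Complex.I * θ))) θ

/-- The modulus of continuity `ω_Γ(f, ε)` of a function on the unit circle. -/
noncomputable def omegaΓ (f : ℂ → ℂ) (ε : ℝ) : ℝ :=
  sSup {r : ℝ | ∃ T₁ ∈ sphere (0 : ℂ) 1, ∃ T₂ ∈ sphere (0 : ℂ) 1,
    ‖T₁ - T₂‖ ≤ ε ∧ r = ‖f T₁ - f T₂‖}

namespace ConformalMap

variable (C : ConformalMap)

/-- `τ(t) = σ((t−i)/(t+i))`, the composition with the conformal map of the upper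
half-plane onto the unit disk. -/
noncomputable def τ (t : ℝ) : ℂ := C.σ (((t : ℂ) - Complex.I) / ((t : ℂ) + Complex.I))

/-- `τ'(s) = (2i/(s+i)²)·σ'((s−i)/(s+i))`. -/
noncomputable def τ' (s : ℝ) : ℂ :=
  (2 * Complex.I / ((s : ℂ) + Complex.I) ^ 2) * C.σ' (((s : ℂ) - Complex.I) / ((s : ℂ) + Complex.I))

/-- The kernel `k₁(t,s)`. -/
noncomputable def k₁ (t s : ℝ) : ℂ :=
  C.τ' s / (C.τ s - C.τ t) - (((1 + s * t) / ((s - t) * (s ^ 2 + 1)) : ℝ) : ℂ)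

/-- The kernel `k₂(t,s)`. -/
noncomputable def k₂ (t s : ℝ) : ℂ :=
  C.τ' s * ((((C.τ s).im - (C.τ t).im : ℝ)) : ℂ) / (2 * (C.τ s - C.τ t) ^ 2)
    - (((C.τ' s).im : ℂ)) / (2 * (C.τ s - C.τ t))

/-- The Dini condition `∫₀¹ ω_Γ(σ', η)/η dη < ∞`. -/
def DiniCondition : Prop :=
  IntervalIntegrable (fun η => omegaΓ C.σ' η / η) volume 0 1

/-- The logarithmic Dini condition `∫₀² (ω_Γ(σ', η)/η)·ln(3/η) dη < ∞`. -/
def LogDiniCondition : Prop :=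
  IntervalIntegrable (fun η => omegaΓ C.σ' η / η * Real.log (3 / η)) volume 0 2

end ConformalMap

/-- The sup norm of a function on the real line. -/
noncomputable def supNorm (g : ℝ → ℂ) : ℝ := ⨆ t : ℝ, ‖g t‖

/-- Membership in `C(ℝ̄)`: continuity on `ℝ` together with a finite limit at infinity. -/
def MemCRbar (g : ℝ → ℂ) (L : ℂ) : Prop :=
  Continuous g ∧ Tendsto g (cocompact ℝ) (𝓝 L)

namespace DQBaux

open Real

noncomputable def ee (t : ℝ) : ℂ := Complex.exp (Complex.I * t)

lemma ee_add (a b : ℝ) : ee (a + b) = ee a * ee b := by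
  rw [ee, ee, ee, ← Complex.exp_add]; push_cast; ring_nf

lemma abs_ee (t : ℝ) : ‖ee t‖ = 1 := by
  simp [ee, Complex.norm_exp]

lemma ee_mem (t : ℝ) : ee t ∈ sphere (0 : ℂ) 1 := by
  rw [mem_sphere_iff_norm, sub_zero, abs_ee]

lemma ee_ne_zero (t : ℝ) : ee t ≠ 0 := Complex.exp_ne_zero _

lemma continuous_ee : Continuous ee :=
  Complex.continuous_exp.comp (continuous_const.mul Complex.continuous_ofReal)

lemma ee_sub_neg (x : ℝ) : ee x - ee (-x) = 2 * Real.sin x * Complex.I := by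
  rw [ee, ee, mul_comm Complex.I, mul_comm Complex.I]
  push_cast
  rw [Complex.exp_mul_I, Complex.exp_mul_I, Complex.cos_neg, Complex.sin_neg]
  ring

lemma abs_ee_sub_ee (s t : ℝ) :
    ‖ee s - ee t‖ = 2 * |Real.sin ((s - t) / 2)| := by
  have hs : s = (s + t) / 2 + (s - t) / 2 := by ring
  have ht : t = (s + t) / 2 + -((s - t) / 2) := by ring
  calc ‖ee s - ee t‖
      = ‖ee ((s + t) / 2) * (ee ((s - t) / 2) - ee (-((s - t) / 2)))‖ := by
        rw [mul_sub, ← ee_add, ← ee_add, ← hs, ← ht]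
    _ = 2 * |Real.sin ((s - t) / 2)| := by
        rw [norm_mul, abs_ee, ee_sub_neg, one_mul, norm_mul, norm_mul, Complex.norm_I,
          Complex.norm_two, Complex.norm_real, Real.norm_eq_abs, mul_one]

lemma abs_ee_sub_ee_le (s t : ℝ) : ‖ee s - ee t‖ ≤ |s - t| := by
  rw [abs_ee_sub_ee]
  have h1 : |Real.sin ((s - t) / 2)| ≤ |(s - t) / 2| := Real.abs_sin_le_abs
  have h2 : |(s - t) / 2| = |s - t| / 2 := by rw [abs_div]; norm_num
  linarith

lemma le_abs_ee_sub_ee {s t : ℝ} (h : |s - t| ≤ π) :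
    2 / π * |s - t| ≤ ‖ee s - ee t‖ := by
  rw [abs_ee_sub_ee]
  have h2 : |(s - t) / 2| = |s - t| / 2 := by rw [abs_div]; norm_num
  have h1 : 2 / π * |(s - t) / 2| ≤ |Real.sin ((s - t) / 2)| := by
    apply Real.mul_abs_le_abs_sin
    rw [h2]; linarith
  rw [h2] at h1
  have hπ : (0 : ℝ) < π := Real.pi_pos
  nlinarith

lemma exists_angle {T : ℂ} (hT : T ∈ sphere (0 : ℂ) 1) (t₀ : ℝ) :
    ∃ t : ℝ, |t - t₀| ≤ π ∧ ee t = T := by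
  have habsT : ‖T‖ = 1 := by
    rwa [mem_sphere_iff_norm, sub_zero] at hT
  set z : ℂ := T / ee t₀ with hz
  have habsz : ‖z‖ = 1 := by
    rw [hz, norm_div, habsT, abs_ee]; norm_num
  have hexp : Complex.exp ((z.arg : ℂ) * Complex.I) = z := by
    have := Complex.norm_mul_exp_arg_mul_I z
    rwa [habsz, Complex.ofReal_one, one_mul] at this
  refine ⟨t₀ + z.arg, by simpa using Complex.abs_arg_le_pi z, ?_⟩
  rw [ee_add]
  have : ee z.arg = z := by rw [ee, mul_comm]; exact hexp
  rw [this, hz, mul_comm, div_mul_cancel₀ _ (ee_ne_zero t₀)]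

lemma hasDerivAt_ee (t : ℝ) : HasDerivAt ee (Complex.I * ee t) t := by
  have h2 := (((hasDerivAt_id ((t : ℝ) : ℂ)).const_mul Complex.I).cexp).comp_ofReal
  rw [show ee = fun t : ℝ => Complex.exp (Complex.I * t) from rfl]; simpa [ee, mul_comm] using h2

variable (C : ConformalMap)

noncomputable def g (u : ℝ) : ℂ := C.σ' (ee u)

lemma continuous_g : Continuous (g C) :=
  C.cont_deriv.comp_continuous continuous_ee ee_mem

lemma integrable_ee (a b : ℝ) :
    IntervalIntegrable (fun u : ℝ => Complex.I * ee u) volume a b :=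
  (continuous_const.mul continuous_ee).intervalIntegrable a b

lemma integrable_main (a b : ℝ) :
    IntervalIntegrable (fun u : ℝ => Complex.I * ee u * g C u) volume a b :=
  ((continuous_const.mul continuous_ee).mul (continuous_g C)).intervalIntegrable a b

lemma integral_ee (t s : ℝ) : ∫ u in t..s, Complex.I * ee u = ee s - ee t := by
  apply intervalIntegral.integral_eq_sub_of_hasDerivAt
  · exact fun x _ => hasDerivAt_ee x
  · exact integrable_ee t s

lemma integral_sigma (t s : ℝ) :
    ∫ u in t..s, Complex.I * ee u * g C u = C.σ (ee s) - C.σ (ee t) := by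
  apply intervalIntegral.integral_eq_sub_of_hasDerivAt
  · intro x _
    exact C.hasDeriv x
  · exact integrable_main C t s

lemma key {t₀ s t : ℝ} {B : ℝ}
    (hB : ∀ u ∈ Set.uIcc t s, ‖g C u - g C t₀‖ ≤ B)
    (hne : ee s ≠ ee t) (hd : |s - t| ≤ π) :
    ‖(C.σ (ee s) - C.σ (ee t)) / (ee s - ee t) - C.σ' (ee t₀)‖ ≤ π / 2 * B := by
  have hD : ee s - ee t ≠ 0 := sub_ne_zero.2 hne
  have habs : 2 / π * |s - t| ≤ ‖ee s - ee t‖ := le_abs_ee_sub_ee hd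
  have hB0 : 0 ≤ B := le_trans (norm_nonneg _) (hB t Set.left_mem_uIcc)
  have hN : C.σ (ee s) - C.σ (ee t) - C.σ' (ee t₀) * (ee s - ee t)
      = ∫ u in t..s, Complex.I * ee u * (g C u - g C t₀) := by
    have h3 : ∫ u in t..s, Complex.I * ee u * (g C u - g C t₀)
        = (∫ u in t..s, Complex.I * ee u * g C u)
          - (∫ u in t..s, Complex.I * ee u) * g C t₀ := by
      rw [← intervalIntegral.integral_mul_const,
        ← intervalIntegral.integral_sub (integrable_main C t s)
          ((integrable_ee t s).mul_const _)]
      congr 1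
      funext u
      ring
    rw [h3, integral_sigma C t s, integral_ee t s]
    unfold g
    ring
  have hNbound : ‖∫ u in t..s, Complex.I * ee u * (g C u - g C t₀)‖
      ≤ B * |s - t| := by
    apply intervalIntegral.norm_integral_le_of_norm_le_const
    intro x hx
    have hx' : x ∈ Set.uIcc t s := Set.uIoc_subset_uIcc hx
    calc ‖Complex.I * ee x * (g C x - g C t₀)‖
        = ‖g C x - g C t₀‖ := by
          rw [norm_mul, norm_mul, Complex.norm_I, abs_ee, one_mul, one_mul]
      _ ≤ B := hB x hx'
  have hq : (C.σ (ee s) - C.σ (ee t)) / (ee s - ee t) - C.σ' (ee t₀)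
      = (C.σ (ee s) - C.σ (ee t) - C.σ' (ee t₀) * (ee s - ee t)) / (ee s - ee t) := by
    field_simp
  rw [hq, norm_div, hN]
  have hDpos : 0 < ‖ee s - ee t‖ := norm_pos_iff.mpr hD
  rw [div_le_iff₀ hDpos]
  have hπ : (0 : ℝ) < π := Real.pi_pos
  have hkey : π / 2 * B * (2 / π * |s - t|) = B * |s - t| := by
    field_simp
  linarith [mul_le_mul_of_nonneg_left habs (by positivity : (0 : ℝ) ≤ π / 2 * B), hNbound]

lemma cwa_diag {T₀ : ℂ} (hT₀ : T₀ ∈ sphere (0 : ℂ) 1) :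
    ContinuousWithinAt
      (fun p : ℂ × ℂ => if p.1 = p.2 then C.σ' p.2 else (C.σ p.1 - C.σ p.2) / (p.1 - p.2))
      (sphere 0 1 ×ˢ sphere 0 1) (T₀, T₀) := by
  obtain ⟨t₀, -, ht₀⟩ := exists_angle hT₀ 0
  rw [Metric.continuousWithinAt_iff]
  intro ε hε
  obtain ⟨δ₁, hδ₁pos, hδ₁⟩ := Metric.continuous_iff.mp (continuous_g C) t₀ (ε / 2) (half_pos hε)
  have hπ : (0 : ℝ) < π := Real.pi_pos
  refine ⟨min (2 * δ₁ / π) 1, by positivity, ?_⟩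
  intro p hp hdist
  obtain ⟨hp1, hp2⟩ := hp
  obtain ⟨s, hsπ, hs⟩ := exists_angle hp1 t₀
  obtain ⟨t, htπ, ht⟩ := exists_angle hp2 t₀
  have hdist1 : ‖ee s - ee t₀‖ < min (2 * δ₁ / π) 1 := by
    rw [hs, ht₀, ← Complex.dist_eq]
    refine lt_of_le_of_lt ?_ hdist
    rw [Prod.dist_eq]
    exact le_max_left _ _
  have hdist2 : ‖ee t - ee t₀‖ < min (2 * δ₁ / π) 1 := by
    rw [ht, ht₀, ← Complex.dist_eq]
    refine lt_of_le_of_lt ?_ hdist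
    rw [Prod.dist_eq]
    exact le_max_right _ _
  have hchord : ∀ u : ℝ, |u - t₀| ≤ π → ‖ee u - ee t₀‖ < min (2 * δ₁ / π) 1 →
      |u - t₀| < δ₁ ∧ |u - t₀| ≤ π / 2 := by
    intro u hu hlt
    have h1 : 2 / π * |u - t₀| ≤ ‖ee u - ee t₀‖ := le_abs_ee_sub_ee hu
    constructor
    · have h2 : (2 * |u - t₀|) / π < (2 * δ₁) / π := by
        calc (2 * |u - t₀|) / π = 2 / π * |u - t₀| := by ring
          _ < 2 * δ₁ / π := lt_of_le_of_lt h1 (lt_of_lt_of_le hlt (min_le_left _ _))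
      have h3 := (div_lt_div_iff₀ hπ hπ).mp h2
      nlinarith
    · have h2 : (2 * |u - t₀|) / π < 1 := by
        calc (2 * |u - t₀|) / π = 2 / π * |u - t₀| := by ring
          _ < 1 := lt_of_le_of_lt h1 (lt_of_lt_of_le hlt (min_le_right _ _))
      have h3 := (div_lt_one hπ).mp h2
      linarith
  obtain ⟨hs1, hs2⟩ := hchord s hsπ hdist1
  obtain ⟨ht1, ht2⟩ := hchord t htπ hdist2
  have hg0 : C.σ' T₀ = g C t₀ := by rw [g, ht₀]
  simp only
  rcases eq_or_ne p.1 p.2 with hpe | hpe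
  · simp only [if_pos hpe, if_true]
    have : p.2 = ee t := ht.symm
    rw [this, hg0]
    have hdt : dist t t₀ < δ₁ := by rwa [Real.dist_eq]
    have := hδ₁ t hdt
    calc dist (C.σ' (ee t)) (g C t₀) = dist (g C t) (g C t₀) := rfl
      _ < ε / 2 := this
      _ < ε := by linarith
  · simp only [if_neg hpe, if_true]
    have hne' : ee s ≠ ee t := by rw [hs, ht]; exact hpe
    have hd : |s - t| ≤ π := by
      have h1 : |s - t| ≤ |s - t₀| + |t₀ - t| := abs_sub_le s t₀ t
      have h2 : |t₀ - t| = |t - t₀| := abs_sub_comm t₀ t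
      linarith
    have hB : ∀ u ∈ Set.uIcc t s, ‖g C u - g C t₀‖ ≤ ε / 2 := by
      intro u hu
      have hu1 : |u - t₀| < δ₁ := by
        rw [Set.mem_uIcc] at hu
        rw [abs_lt] at hs1 ht1 ⊢
        rcases hu with ⟨h1, h2⟩ | ⟨h1, h2⟩ <;> constructor <;> linarith [hs1.1, hs1.2, ht1.1, ht1.2]
      have h2 := hδ₁ u (by rwa [Real.dist_eq])
      rw [Complex.dist_eq] at h2
      exact h2.le
    have hkey := key C hB hne' hd
    rw [Complex.dist_eq, ← hs, ← ht, ← ht₀]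
    calc ‖(C.σ (ee s) - C.σ (ee t)) / (ee s - ee t) - C.σ' (ee t₀)‖
        ≤ π / 2 * (ε / 2) := hkey
      _ < ε := by nlinarith [Real.pi_lt_d2]

lemma cwa_off {S₀ T₀ : ℂ} (hS : S₀ ∈ sphere (0 : ℂ) 1) (hT : T₀ ∈ sphere (0 : ℂ) 1)
    (hne : S₀ ≠ T₀) :
    ContinuousWithinAt
      (fun p : ℂ × ℂ => if p.1 = p.2 then C.σ' p.2 else (C.σ p.1 - C.σ p.2) / (p.1 - p.2))
      (sphere 0 1 ×ˢ sphere 0 1) (S₀, T₀) := by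
  have hσ : ContinuousOn C.σ (sphere (0 : ℂ) 1) := C.contOn.mono sphere_subset_closedBall
  have ha : ContinuousWithinAt (fun p : ℂ × ℂ => C.σ p.1) (sphere 0 1 ×ˢ sphere 0 1) (S₀, T₀) :=
    (hσ S₀ hS).comp continuousWithinAt_fst fun p hp => hp.1
  have hb : ContinuousWithinAt (fun p : ℂ × ℂ => C.σ p.2) (sphere 0 1 ×ˢ sphere 0 1) (S₀, T₀) :=
    (hσ T₀ hT).comp continuousWithinAt_snd fun p hp => hp.2
  have h1 : ContinuousWithinAt (fun p : ℂ × ℂ => (C.σ p.1 - C.σ p.2) / (p.1 - p.2))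
      (sphere 0 1 ×ˢ sphere 0 1) (S₀, T₀) :=
    (ha.sub hb).div (continuousWithinAt_fst.sub continuousWithinAt_snd) (sub_ne_zero.2 hne)
  apply h1.congr_of_eventuallyEq
  · have hopen : IsOpen {p : ℂ × ℂ | p.1 ≠ p.2} :=
      isOpen_compl_iff.mpr (isClosed_eq continuous_fst continuous_snd)
    have hmem : (S₀, T₀) ∈ {p : ℂ × ℂ | p.1 ≠ p.2} := hne
    filter_upwards [eventually_nhdsWithin_of_eventually_nhds
      (hopen.eventually_mem hmem)] with p hp
    exact if_neg hp
  · exact if_neg hne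

end DQBaux

/-- There exist constants `0 < c₁ ≤ c₂` such that
`c₁ ≤ |(σ(S) − σ(T))/(S − T)| ≤ c₂` for all distinct `S, T` on the unit circle. -/
theorem difference_quotient_bounded (C : ConformalMap) :
    ∃ c₁ c₂ : ℝ, 0 < c₁ ∧ c₁ ≤ c₂ ∧
      ∀ S ∈ sphere (0 : ℂ) 1, ∀ T ∈ sphere (0 : ℂ) 1, S ≠ T →
        c₁ ≤ ‖(C.σ S - C.σ T) / (S - T)‖ ∧
          ‖(C.σ S - C.σ T) / (S - T)‖ ≤ c₂ := by
  classical
  set F : ℂ × ℂ → ℂ :=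
    fun p => if p.1 = p.2 then C.σ' p.2 else (C.σ p.1 - C.σ p.2) / (p.1 - p.2) with hF
  set K : Set (ℂ × ℂ) := sphere 0 1 ×ˢ sphere 0 1 with hKdef
  have hFK : ContinuousOn F K := by
    rintro ⟨a, b⟩ ⟨h1, h2⟩
    rcases eq_or_ne a b with rfl | hab
    · exact DQBaux.cwa_diag C h2
    · exact DQBaux.cwa_off C h1 h2 hab
  have hFne : ∀ p ∈ K, F p ≠ 0 := by
    rintro ⟨a, b⟩ ⟨h1, h2⟩
    rcases eq_or_ne a b with rfl | hab
    · simpa [hF] using C.deriv_ne_zero a h2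
    · have hval : F (a, b) = (C.σ a - C.σ b) / (a - b) := if_neg hab
      rw [hval]
      apply div_ne_zero
      · exact sub_ne_zero.2 fun hEq =>
          hab (C.injOn (sphere_subset_closedBall h1) (sphere_subset_closedBall h2) hEq)
      · exact sub_ne_zero.2 hab
  have hKc : IsCompact K := (isCompact_sphere (0 : ℂ) 1).prod (isCompact_sphere (0 : ℂ) 1)
  have hKne : K.Nonempty := ⟨(1, 1), by constructor <;> simp⟩
  have habsF : ContinuousOn (fun p => ‖F p‖) K :=
    continuous_norm.comp_continuousOn hFK
  obtain ⟨p₁, hp₁K, hmin'⟩ := hKc.exists_isMinOn hKne habsF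
  obtain ⟨p₂, hp₂K, hmax'⟩ := hKc.exists_isMaxOn hKne habsF
  have hmin : ∀ q ∈ K, ‖F p₁‖ ≤ ‖F q‖ := fun q hq => hmin' hq
  have hmax : ∀ q ∈ K, ‖F q‖ ≤ ‖F p₂‖ := fun q hq => hmax' hq
  refine ⟨‖F p₁‖, ‖F p₂‖,
    norm_pos_iff.mpr (hFne p₁ hp₁K), hmin p₂ hp₂K, ?_⟩
  intro S hS T hT hST
  have hmem : (S, T) ∈ K := ⟨hS, hT⟩
  have hval : F (S, T) = (C.σ S - C.σ T) / (S - T) := if_neg hST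
  exact ⟨hval ▸ hmin (S, T) hmem, hval ▸ hmax (S, T) hmem⟩
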